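/- Let Q ∈ 𝕊₊ⁿ, b in the range of Q, S ∈ 𝕊₊ⁿ, and x* a solution of Qx = b. Consider the Nesterov iteration: x⁰ = y¹, α₀ = 0, α₁ = 1, and for t ≥ 1: Qxᵗ − b + S(xᵗ − yᵗ) = 0, α_{t+1} = (1+√(1+4α_t²))/2, y^{t+1} = (1 + (α_t−1)/α_{t+1})xᵗ − ((α_t−1)/α_{t+1})x^{t−1}. Define wᵗ = α_t xᵗ − (α_t − 1)x^{t−1} − x*. Then α_t²(f(xᵗ) − f(x*)) + ½⟨wᵗ, Swᵗ⟩ ≤ α_{t−1}²(f(x^{t−1}) − f(x*)) + ½⟨w^{t−1}, Sw^{t−1}⟩ for all t ≥ 1. -/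

import Mathlib

open Matrix

private lemma nesterov_dot_symm {n : ℕ} (M : Matrix (Fin n) (Fin n) ℝ) (hM : Mᵀ = M)
    (a c : Fin n → ℝ) : a ⬝ᵥ M *ᵥ c = c ⬝ᵥ M *ᵥ a := by
  rw [Matrix.dotProduct_mulVec, ← Matrix.mulVec_transpose, hM, dotProduct_comm]

private lemma nesterov_quad_expand {n : ℕ} (M : Matrix (Fin n) (Fin n) ℝ) (hM : Mᵀ = M)
    (u v : Fin n → ℝ) (c : ℝ) :
    (u + c • v) ⬝ᵥ M *ᵥ (u + c • v)
      = u ⬝ᵥ M *ᵥ u + 2 * c * (v ⬝ᵥ M *ᵥ u) + c ^ 2 * (v ⬝ᵥ M *ᵥ v) := by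
  simp only [Matrix.mulVec_add, Matrix.mulVec_smul, dotProduct_add, add_dotProduct,
    dotProduct_smul, smul_dotProduct, smul_eq_mul]
  rw [nesterov_dot_symm M hM u v]
  ring

theorem nesterov_recursive_descent {n : ℕ}
    (Q S : Matrix (Fin n) (Fin n) ℝ) (b : Fin n → ℝ)
    (hQ : Q.PosSemidef) (hS : S.PosSemidef) (hb : ∃ z, Q *ᵥ z = b)
    (f : (Fin n → ℝ) → ℝ)
    (hf : ∀ x, f x = (1 / 2) * (x ⬝ᵥ Q *ᵥ x) - b ⬝ᵥ x)
    (xstar : Fin n → ℝ) (hxstar : Q *ᵥ xstar = b)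
    (x y : ℕ → (Fin n → ℝ)) (α : ℕ → ℝ)
    (hα0 : α 0 = 0) (hα1 : α 1 = 1)
    (hαrec : ∀ t, 1 ≤ t → α (t + 1) = (1 + Real.sqrt (1 + 4 * (α t) ^ 2)) / 2)
    (hx0 : x 0 = y 1)
    (hopt : ∀ t, 1 ≤ t → Q *ᵥ x t - b + S *ᵥ (x t - y t) = 0)
    (hy : ∀ t, 1 ≤ t →
      y (t + 1) = (1 + (α t - 1) / α (t + 1)) • x t - ((α t - 1) / α (t + 1)) • x (t - 1))
    (w : ℕ → (Fin n → ℝ))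
    (hw : ∀ t, w t = α t • x t - (α t - 1) • x (t - 1) - xstar) :
    ∀ t, 1 ≤ t →
      (α t) ^ 2 * (f (x t) - f xstar) + (1 / 2) * (w t ⬝ᵥ S *ᵥ w t)
        ≤ (α (t - 1)) ^ 2 * (f (x (t - 1)) - f xstar)
          + (1 / 2) * (w (t - 1) ⬝ᵥ S *ᵥ w (t - 1)) := by
  have hQt : Qᵀ = Q := (by simpa using hQ.1 : Q.IsSymm).eq
  have hSt : Sᵀ = S := (by simpa using hS.1 : S.IsSymm).eq
  -- α t ≥ 1 for t ≥ 1
  have hα_ge : ∀ t, 1 ≤ t → 1 ≤ α t := by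
    intro t ht
    induction t with
    | zero => omega
    | succ s ih =>
      rcases Nat.lt_or_ge 1 (s + 1) with h | h
      · have hs : 1 ≤ s := by omega
        rw [hαrec s hs]
        have h1 : Real.sqrt 1 ≤ Real.sqrt (1 + 4 * α s ^ 2) :=
          Real.sqrt_le_sqrt (by nlinarith [sq_nonneg (α s)])
        rw [Real.sqrt_one] at h1
        linarith
      · have : s + 1 = 1 := by omega
        rw [this, hα1]
  -- recursion α t * (α t - 1) = α (t-1) ^ 2
  have hαsq : ∀ t, 1 ≤ t → α t * (α t - 1) = α (t - 1) ^ 2 := by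
    intro t ht
    match t, ht with
    | 1, _ => simp [hα1, hα0]
    | (s + 2), _ =>
      have hs : 1 ≤ s + 1 := by omega
      have hr := hαrec (s + 1) hs
      have hnn : (0:ℝ) ≤ 1 + 4 * α (s + 1) ^ 2 := by nlinarith [sq_nonneg (α (s + 1))]
      have hsq : Real.sqrt (1 + 4 * α (s + 1) ^ 2) ^ 2 = 1 + 4 * α (s + 1) ^ 2 :=
        Real.sq_sqrt hnn
      show α (s + 2) * (α (s + 2) - 1) = α (s + 1) ^ 2
      rw [hr]
      nlinarith [hsq]
  -- key descent inequality
  have key : ∀ t, 1 ≤ t → ∀ z,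
      f (x t) + (S *ᵥ (y t - x t)) ⬝ᵥ (z - x t) ≤ f z := by
    intro t ht z
    have hg : Q *ᵥ x t - b = S *ᵥ (y t - x t) := by
      have h := hopt t ht
      have : Q *ᵥ x t - b = -(S *ᵥ (x t - y t)) :=
        eq_neg_of_add_eq_zero_left h
      rw [this, ← Matrix.mulVec_neg]
      congr 1
      abel
    have expand : f z - f (x t) - (Q *ᵥ x t - b) ⬝ᵥ (z - x t)
        = (1 / 2) * ((z - x t) ⬝ᵥ Q *ᵥ (z - x t)) := by
      rw [hf z, hf (x t)]
      simp only [Matrix.mulVec_sub, dotProduct_sub, sub_dotProduct]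
      rw [nesterov_dot_symm Q hQt (x t) z, dotProduct_comm (Q *ᵥ x t) z,
        dotProduct_comm (Q *ᵥ x t) (x t)]
      ring
    have hpos : 0 ≤ (z - x t) ⬝ᵥ Q *ᵥ (z - x t) := by simpa using hQ.dotProduct_mulVec_nonneg (z - x t)
    rw [← hg]
    linarith [expand]
  -- relation w (t-1) = w t + α t • (y t - x t)
  have hwrel : ∀ t, 1 ≤ t → w (t - 1) = w t + α t • (y t - x t) := by
    intro t ht
    match t, ht with
    | 1, _ =>
      rw [hw 0, hw 1]
      simp only [Nat.sub_self, Nat.zero_sub, hα0, hα1, hx0]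
      funext i
      simp only [Pi.add_apply, Pi.sub_apply, Pi.smul_apply, smul_eq_mul]
      ring
    | (s + 2), _ =>
      have hs : 1 ≤ s + 1 := by omega
      have hne : α (s + 2) ≠ 0 := by
        have := hα_ge (s + 2) (by omega); linarith
      show w (s + 1) = w (s + 2) + α (s + 2) • (y (s + 2) - x (s + 2))
      rw [hw (s + 1), hw (s + 2), hy (s + 1) hs]
      have e1 : s + 1 - 1 = s := rfl
      have e2 : s + 2 - 1 = s + 1 := rfl
      rw [e1, e2]
      funext i
      simp only [Pi.add_apply, Pi.sub_apply, Pi.smul_apply, smul_eq_mul]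
      field_simp
      ring
  -- main combination
  intro t ht
  have ha1 : 1 ≤ α t := hα_ge t ht
  have hrec := hαsq t ht
  have hwr := hwrel t ht
  set a := α t with ha_def
  set d := y t - x t with hd_def
  set g := S *ᵥ d with hg_def
  -- scalar abbreviations
  have E1 : f (x t) + g ⬝ᵥ (x (t - 1) - x t) ≤ f (x (t - 1)) := key t ht (x (t - 1))
  have E2 : f (x t) + g ⬝ᵥ (xstar - x t) ≤ f xstar := key t ht xstar
  -- dot product of g with w t
  have Hg : g ⬝ᵥ w t = a * (g ⬝ᵥ x t) - (a - 1) * (g ⬝ᵥ x (t - 1)) - g ⬝ᵥ xstar := by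
    rw [hw t]
    simp only [dotProduct_sub, dotProduct_smul, smul_eq_mul, ← ha_def]
  have Hsym : d ⬝ᵥ S *ᵥ w t = g ⬝ᵥ w t := by
    rw [hg_def, nesterov_dot_symm S hSt d (w t), dotProduct_comm]
  have EB : w (t - 1) ⬝ᵥ S *ᵥ w (t - 1)
      = w t ⬝ᵥ S *ᵥ w t + 2 * a * (d ⬝ᵥ S *ᵥ w t) + a ^ 2 * (d ⬝ᵥ S *ᵥ d) := by
    rw [hwr]
    exact nesterov_quad_expand S hSt (w t) d a
  have Ed : 0 ≤ d ⬝ᵥ S *ᵥ d := by simpa using hS.dotProduct_mulVec_nonneg d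
  have Ea2 : 0 ≤ a ^ 2 * (d ⬝ᵥ S *ᵥ d) := mul_nonneg (sq_nonneg a) Ed
  have Ex1 : g ⬝ᵥ (x (t - 1) - x t) = g ⬝ᵥ x (t - 1) - g ⬝ᵥ x t := dotProduct_sub g _ _
  have Ex2 : g ⬝ᵥ (xstar - x t) = g ⬝ᵥ xstar - g ⬝ᵥ x t := dotProduct_sub g _ _
  have ha0 : (0:ℝ) ≤ a := by linarith
  have hnn : (0:ℝ) ≤ a * (a - 1) := by nlinarith
  have M1 : a * (a - 1) * (f (x t) - f (x (t - 1)))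
      ≤ a * (a - 1) * (g ⬝ᵥ x t - g ⬝ᵥ x (t - 1)) :=
    mul_le_mul_of_nonneg_left (by linarith [E1, Ex1]) hnn
  have M2 : a * (f (x t) - f xstar) ≤ a * (g ⬝ᵥ x t - g ⬝ᵥ xstar) :=
    mul_le_mul_of_nonneg_left (by linarith [E2, Ex2]) ha0
  have hrecB : α (t - 1) ^ 2 * (f (x (t - 1)) - f xstar)
      = a * (a - 1) * (f (x (t - 1)) - f xstar) := by rw [hrec]
  have final : a ^ 2 * (f (x t) - f xstar) - a * (a - 1) * (f (x (t - 1)) - f xstar)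
      ≤ a * (d ⬝ᵥ S *ᵥ w t) := by
    calc a ^ 2 * (f (x t) - f xstar) - a * (a - 1) * (f (x (t - 1)) - f xstar)
        = a * (a - 1) * (f (x t) - f (x (t - 1))) + a * (f (x t) - f xstar) := by ring
      _ ≤ a * (a - 1) * (g ⬝ᵥ x t - g ⬝ᵥ x (t - 1)) + a * (g ⬝ᵥ x t - g ⬝ᵥ xstar) :=
          add_le_add M1 M2
      _ = a * (g ⬝ᵥ w t) := by rw [Hg]; ring
      _ = a * (d ⬝ᵥ S *ᵥ w t) := by rw [Hsym]
  linarith [final, EB, Ea2, hrecB]
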